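/- With n ≥ 2 agents and additive preference vectors P^1,...,P^n : Fin m → ℝ≥0, suppose there exists an allocation β with min_i u_i(β) > 0 (every agent gets positive utility). Suppose agent 1 reports the scaled vector c·P^1 where c > 0 satisfies c · Σ_j P^1(j) < P^k(l) for all k ≠ 1 and l with P^k(l) > 0. Then any allocation α* maximizing the egalitarian welfare of the reported profile (c·P^1, P^2, ..., P^n) also maximizes agent 1's true utility u_1(α) = Σ_{j : α(j)=1} P^1(j) among all allocations α in which every other agent k ≠ 1 has positive utility u_k(α) > 0. -/

import Mathlib

/-- Additive utility of agent `i` under preference vector `p`. -/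
def addUtil {n m : ℕ} (p : Fin m → ℝ) (i : Fin n) (α : Fin m → Fin n) : ℝ :=
  ∑ j ∈ Finset.univ.filter (fun j => α j = i), p j

/-- Egalitarian social welfare of the additive profile `P`. -/
noncomputable def eg {n m : ℕ} (hn : 0 < n) (P : Fin n → Fin m → ℝ)
    (α : Fin m → Fin n) : ℝ :=
  Finset.univ.inf' (Finset.univ_nonempty_iff.mpr (Fin.pos_iff_nonempty.mp hn))
    fun i => addUtil (P i) i α

lemma addUtil_nonneg {n m : ℕ} (p : Fin m → ℝ) (hp : ∀ j, 0 ≤ p j) (i : Fin n)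
    (α : Fin m → Fin n) : 0 ≤ addUtil p i α :=
  Finset.sum_nonneg fun j _ => hp j

lemma addUtil_le_total {n m : ℕ} (p : Fin m → ℝ) (hp : ∀ j, 0 ≤ p j) (i : Fin n)
    (α : Fin m → Fin n) : addUtil p i α ≤ ∑ j, p j :=
  Finset.sum_le_sum_of_subset_of_nonneg (Finset.filter_subset _ _)
    (fun j _ _ => hp j)

lemma exists_pos_of_addUtil_pos {n m : ℕ} (p : Fin m → ℝ) (hp : ∀ j, 0 ≤ p j)
    (i : Fin n) (α : Fin m → Fin n) (h : 0 < addUtil p i α) :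
    ∃ l, α l = i ∧ 0 < p l := by
  by_contra hcon
  push_neg at hcon
  have : addUtil p i α = 0 := by
    apply Finset.sum_eq_zero
    intro j hj
    simp only [Finset.mem_filter] at hj
    exact le_antisymm (hcon j hj.2) (hp j)
  linarith

lemma addUtil_smul {n m : ℕ} (c : ℝ) (p : Fin m → ℝ) (i : Fin n)
    (α : Fin m → Fin n) : addUtil (fun j => c * p j) i α = c * addUtil p i α := by
  simp [addUtil, Finset.mul_sum]

theorem stmt_5 (n m : ℕ) (hn : 2 ≤ n) (P : Fin n → Fin m → ℝ)
    (hP : ∀ i j, 0 ≤ P i j) (a1 : Fin n)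
    (hβ : ∃ β : Fin m → Fin n, 0 < eg (lt_of_lt_of_le two_pos hn) P β)
    (c : ℝ) (hc : 0 < c)
    (hcsmall : ∀ k : Fin n, k ≠ a1 → ∀ l : Fin m, 0 < P k l →
      c * ∑ j, P a1 j < P k l)
    (αstar : Fin m → Fin n)
    (hopt : ∀ α : Fin m → Fin n,
      eg (lt_of_lt_of_le two_pos hn)
        (fun k => if k = a1 then (fun j => c * P a1 j) else P k) α ≤
      eg (lt_of_lt_of_le two_pos hn)
        (fun k => if k = a1 then (fun j => c * P a1 j) else P k) αstar) :
    ∀ α : Fin m → Fin n, (∀ k : Fin n, k ≠ a1 → 0 < addUtil (P k) k α) →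
      addUtil (P a1) a1 α ≤ addUtil (P a1) a1 αstar := by
  intro α hα
  set hpos : 0 < n := lt_of_lt_of_le two_pos hn with hhpos
  set Q : Fin n → Fin m → ℝ :=
    fun k => if k = a1 then (fun j => c * P a1 j) else P k with hQ
  have hne : (Finset.univ : Finset (Fin n)).Nonempty :=
    Finset.univ_nonempty_iff.mpr (Fin.pos_iff_nonempty.mp hpos)
  -- For k ≠ a1 with positive true utility, reported utility exceeds c * total
  have hbig : ∀ (γ : Fin m → Fin n) (k : Fin n), k ≠ a1 →
      0 < addUtil (P k) k γ → c * addUtil (P a1) a1 γ < addUtil (P k) k γ := by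
    intro γ k hk hu
    obtain ⟨l, hl, hpl⟩ := exists_pos_of_addUtil_pos (P k) (hP k) k γ hu
    have h1 : c * ∑ j, P a1 j < P k l := hcsmall k hk l hpl
    have h2 : P k l ≤ addUtil (P k) k γ := by
      refine Finset.single_le_sum (f := fun j => P k j) (fun j _ => hP k j) ?_
      simp [hl]
    have h3 : c * addUtil (P a1) a1 γ ≤ c * ∑ j, P a1 j :=
      mul_le_mul_of_nonneg_left (addUtil_le_total (P a1) (hP a1) a1 γ) hc.le
    linarith
  -- eg of reported profile equals c * (agent a1's true utility) whenever all
  -- other agents get positive utility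
  have heg : ∀ γ : Fin m → Fin n, (∀ k : Fin n, k ≠ a1 → 0 < addUtil (P k) k γ) →
      eg hpos Q γ = c * addUtil (P a1) a1 γ := by
    intro γ hγ
    apply le_antisymm
    · have := Finset.inf'_le (fun i => addUtil (Q i) i γ) (Finset.mem_univ a1)
      simpa [eg, hQ, addUtil_smul, -Finset.inf'_le_iff] using this
    · apply Finset.le_inf'
      intro i _
      by_cases hi : i = a1
      · subst hi; simp [hQ, addUtil_smul]
      · have := hbig γ i hi (hγ i hi)
        simp only [hQ, if_neg hi]
        linarith
  -- eg of reported profile at β is positive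
  obtain ⟨β, hβpos⟩ := hβ
  have hβall : ∀ i : Fin n, 0 < addUtil (P i) i β := by
    intro i
    have := Finset.inf'_le (fun i => addUtil (P i) i β) (Finset.mem_univ i)
    calc (0:ℝ) < eg hpos P β := hβpos
      _ ≤ addUtil (P i) i β := this
  have hQβ : 0 < eg hpos Q β := by
    rw [heg β (fun k hk => hβall k)]
    exact mul_pos hc (hβall a1)
  have hQstar : 0 < eg hpos Q αstar := lt_of_lt_of_le hQβ (hopt β)
  -- all k ≠ a1 get positive true utility at αstar
  have hstarpos : ∀ k : Fin n, k ≠ a1 → 0 < addUtil (P k) k αstar := by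
    intro k hk
    have := Finset.inf'_le (fun i => addUtil (Q i) i αstar) (Finset.mem_univ k)
    have h2 : eg hpos Q αstar ≤ addUtil (Q k) k αstar := this
    simp only [hQ, if_neg hk] at h2
    linarith
  have h1 : eg hpos Q α = c * addUtil (P a1) a1 α := heg α hα
  have h2 : eg hpos Q αstar = c * addUtil (P a1) a1 αstar := heg αstar hstarpos
  have := hopt α
  rw [h1, h2] at this
  exact le_of_mul_le_mul_left this hc
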